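/- arXiv:2201.02129 — 3 statements merged into one kernel-verified Lean document; each statement's English description precedes it below -/
import Mathlib

section
/- Let Γ₁, Γ₂ > 0, s > 0, R̄₁ > 0 and R̄₂ ≥ 0. Define α₂^{lb} = (2^{R̄₂} − 1)/(Γ₂ s) and α₂^{ub} = (Γ₁s + 1 − 2^{R̄₁})/(Γ₂ s (2^{R̄₁} − 1)). Then α₂^{ub} ≥ α₂^{lb} if and only if s ≥ 2^{R̄₂}(2^{R̄₁} − 1)/Γ₁. -/
/-- MPA pairing criterion: α₂^{ub} ≥ α₂^{lb} iff sinc²(δ) = s ≥ 2^{R̄₂}(2^{R̄₁} − 1)/Γ₁. -/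
theorem mpa_pairing_criterion
    (Γ₁ Γ₂ s R₁bar R₂bar : ℝ)
    (hΓ₁ : 0 < Γ₁) (hΓ₂ : 0 < Γ₂) (hs : 0 < s) (hR₁ : 0 < R₁bar) (hR₂ : 0 ≤ R₂bar) :
    (Γ₁ * s + 1 - (2 : ℝ) ^ R₁bar) / (Γ₂ * s * ((2 : ℝ) ^ R₁bar - 1)) ≥
        ((2 : ℝ) ^ R₂bar - 1) / (Γ₂ * s) ↔
      s ≥ (2 : ℝ) ^ R₂bar * ((2 : ℝ) ^ R₁bar - 1) / Γ₁ := by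
  have ha : (1:ℝ) < (2:ℝ) ^ R₁bar := by
    have := Real.one_lt_rpow_iff_of_pos (x := 2) (y := R₁bar) (by norm_num)
    exact this.mpr (Or.inl ⟨by norm_num, hR₁⟩)
  have hb : (1:ℝ) ≤ (2:ℝ) ^ R₂bar := Real.one_le_rpow (by norm_num) hR₂
  have h1 : 0 < Γ₂ * s := by positivity
  have h2 : 0 < Γ₂ * s * ((2:ℝ) ^ R₁bar - 1) := by
    have : 0 < (2:ℝ) ^ R₁bar - 1 := by linarith
    positivity
  rw [ge_iff_le, div_le_div_iff₀ h1 h2, ge_iff_le, div_le_iff₀ hΓ₁]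
  constructor <;> intro h <;> nlinarith [sq_nonneg s, mul_pos hΓ₂ hs]
end

section
/- (MPA guarantee.) Let Γ₁, Γ₂ > 0, s > 0, R̄₁ > 0, R̄₂ ≥ 0, and suppose s ≥ 2^{R̄₂}(2^{R̄₁} − 1)/Γ₁ and s ≥ (2^{R̄₂} − 1)/Γ₂. Set α₁ = 1 and α₂ = min{α₂^{ub}, 1}, where α₂^{ub} = (Γ₁s + 1 − 2^{R̄₁})/(Γ₂ s (2^{R̄₁} − 1)). Then both minimum-rate constraints hold: log₂(1 + Γ₁s/(1 + α₂Γ₂s)) ≥ R̄₁ and log₂(1 + α₂Γ₂s) ≥ R̄₂. -/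
/-- MPA guarantee: under the pairing criterion, the allocation α₁ = 1,
α₂ = min{α₂^{ub}, 1} satisfies both minimum-rate constraints. -/
theorem mpa_guarantee
    (Γ₁ Γ₂ s R₁bar R₂bar α₂ : ℝ)
    (hΓ₁ : 0 < Γ₁) (hΓ₂ : 0 < Γ₂) (hs : 0 < s) (hR₁ : 0 < R₁bar) (hR₂ : 0 ≤ R₂bar)
    (hcrit : s ≥ (2 : ℝ) ^ R₂bar * ((2 : ℝ) ^ R₁bar - 1) / Γ₁)
    (hcrit2 : s ≥ ((2 : ℝ) ^ R₂bar - 1) / Γ₂)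
    (hα₂ : α₂ = min ((Γ₁ * s + 1 - (2 : ℝ) ^ R₁bar) / (Γ₂ * s * ((2 : ℝ) ^ R₁bar - 1))) 1) :
    Real.logb 2 (1 + Γ₁ * s / (1 + α₂ * Γ₂ * s)) ≥ R₁bar ∧
      Real.logb 2 (1 + α₂ * Γ₂ * s) ≥ R₂bar := by
  set A := (2 : ℝ) ^ R₁bar with hAdef
  set B := (2 : ℝ) ^ R₂bar with hBdef
  have hA : 1 < A := by
    rw [hAdef]
    exact Real.one_lt_rpow_iff_of_pos (by norm_num) |>.mpr (Or.inl ⟨by norm_num, hR₁⟩)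
  have hB : 1 ≤ B := by
    rw [hBdef]
    exact Real.one_le_rpow (by norm_num) hR₂
  have hA1 : 0 < A - 1 := by linarith
  have hΓs1 : Γ₁ * s ≥ B * (A - 1) := by
    rw [ge_iff_le, div_le_iff₀ hΓ₁] at hcrit
    nlinarith
  have hΓs2 : Γ₂ * s ≥ B - 1 := by
    rw [ge_iff_le, div_le_iff₀ hΓ₂] at hcrit2
    nlinarith
  have hN : 0 ≤ Γ₁ * s + 1 - A := by nlinarith
  have hD : 0 < Γ₂ * s * (A - 1) := by positivity
  have hα₂0 : 0 ≤ α₂ := by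
    rw [hα₂]
    exact le_min (div_nonneg hN hD.le) (by norm_num)
  have hα₂le : α₂ * (Γ₂ * s * (A - 1)) ≤ Γ₁ * s + 1 - A := by
    have h1 : α₂ ≤ (Γ₁ * s + 1 - A) / (Γ₂ * s * (A - 1)) := hα₂ ▸ min_le_left _ _
    rw [le_div_iff₀ hD] at h1
    exact h1
  have ht0 : 0 ≤ α₂ * Γ₂ * s := by positivity
  have htpos : 0 < 1 + α₂ * Γ₂ * s := by linarith
  have hgoal1 : A ≤ 1 + Γ₁ * s / (1 + α₂ * Γ₂ * s) := by
    rw [← sub_le_iff_le_add', le_div_iff₀ htpos]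
    nlinarith
  have hgoal2 : B ≤ 1 + α₂ * Γ₂ * s := by
    rcases le_total ((Γ₁ * s + 1 - A) / (Γ₂ * s * (A - 1))) 1 with h | h
    · have : α₂ = (Γ₁ * s + 1 - A) / (Γ₂ * s * (A - 1)) := by rw [hα₂, min_eq_left h]
      rw [this]
      rw [← sub_le_iff_le_add', mul_assoc, div_mul_eq_mul_div, le_div_iff₀ hD]
      nlinarith [mul_le_mul_of_nonneg_right (show B * (A - 1) ≤ Γ₁ * s by linarith)
        (mul_pos hΓ₂ hs).le]
    · have : α₂ = 1 := by rw [hα₂, min_eq_right h]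
      rw [this]
      nlinarith
  have hx1 : (0:ℝ) < 1 + Γ₁ * s / (1 + α₂ * Γ₂ * s) := by positivity
  constructor
  · calc R₁bar = Real.logb 2 A := (Real.logb_rpow (by norm_num) (by norm_num)).symm
      _ ≤ _ := Real.logb_le_logb_of_le (by norm_num) (by positivity) hgoal1
  · calc R₂bar = Real.logb 2 B := (Real.logb_rpow (by norm_num) (by norm_num)).symm
      _ ≤ _ := Real.logb_le_logb_of_le (by norm_num) (by positivity) hgoal2
end

section
/- Let Γ₁, Γ₂ > 0, s > 0, R̄₁ > 0, R̄₂ ≥ 0, with s ≥ 2^{R̄₂}(2^{R̄₁} − 1)/Γ₁ and α₂^{ub} = (Γ₁s + 1 − 2^{R̄₁})/(Γ₂ s (2^{R̄₁} − 1)) ≤ 1. Then at the MPA allocation (α₁, α₂) = (1, α₂^{ub}) the achieved sum rate satisfies log₂(1 + (Γ₁ + α₂^{ub}Γ₂)s) ≥ R̄₁ + R̄₂. -/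
/-- At the MPA allocation (1, α₂^{ub}), the achieved sum rate is at least R̄₁ + R̄₂. -/
theorem mpa_sum_rate_meets_targets
    (Γ₁ Γ₂ s R₁bar R₂bar : ℝ)
    (hΓ₁ : 0 < Γ₁) (hΓ₂ : 0 < Γ₂) (hs : 0 < s) (hR₁ : 0 < R₁bar) (hR₂ : 0 ≤ R₂bar)
    (hcrit : s ≥ (2 : ℝ) ^ R₂bar * ((2 : ℝ) ^ R₁bar - 1) / Γ₁)
    (hub : (Γ₁ * s + 1 - (2 : ℝ) ^ R₁bar) / (Γ₂ * s * ((2 : ℝ) ^ R₁bar - 1)) ≤ 1) :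
    Real.logb 2
        (1 + (Γ₁ + ((Γ₁ * s + 1 - (2 : ℝ) ^ R₁bar) /
          (Γ₂ * s * ((2 : ℝ) ^ R₁bar - 1))) * Γ₂) * s) ≥ R₁bar + R₂bar := by
  set A := (2 : ℝ) ^ R₁bar with hA
  set B := (2 : ℝ) ^ R₂bar with hB
  have hA1 : (1 : ℝ) < A :=
    (Real.one_lt_rpow_iff_of_pos two_pos).2 (Or.inl ⟨one_lt_two, hR₁⟩)
  have hB1 : (1 : ℝ) ≤ B := Real.one_le_rpow one_le_two hR₂
  have ha : (0 : ℝ) < A - 1 := by linarith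
  have hden : Γ₂ * s * (A - 1) ≠ 0 := by positivity
  have hx : 1 + (Γ₁ + ((Γ₁ * s + 1 - A) / (Γ₂ * s * (A - 1))) * Γ₂) * s
      = A * Γ₁ * s / (A - 1) := by
    field_simp
    ring
  have hkey : Γ₁ * s ≥ B * (A - 1) := by
    have := (div_le_iff₀ hΓ₁).1 hcrit
    nlinarith
  have hxge : A * Γ₁ * s / (A - 1) ≥ A * B := by
    rw [ge_iff_le, le_div_iff₀ ha]
    nlinarith [hA1.le, hB1]
  have hAB : (2 : ℝ) ^ (R₁bar + R₂bar) = A * B := Real.rpow_add two_pos _ _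
  rw [hx, ge_iff_le, Real.le_logb_iff_rpow_le one_lt_two (by positivity), hAB]
  exact hxge
end
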